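/- (Deterministic separation of maliciousness scores.) There are K = K_b + K_m clients (1 ≤ K_m), clients 1,…,K_b benign and clients K_b+1,…,K malicious, each with a characterization vector v^(k) ∈ ℝ^H. Let K̃_b be an integer with K_m < K̃_b ≤ K_b and K̃_b ≥ 2, and define maliciousness scores using Euclidean distances and K̃_b − 1 nearest neighbors. Let d > 0 and suppose there exists μ ∈ ℝ^H with ‖v^(m) − μ‖₂ ≥ d for every malicious m ∈ {K_b+1,…,K}, and ‖v^(k) − μ‖₂ ≤ r for every benign k ∈ {1,…,K_b}, where 0 ≤ r ≤ (K̃_b − K_m)·d/(3K̃_b − K_m − 2). Then M(m) ≥ M(b) for every malicious client m ∈ {K_b+1,…,K} and every benign client b ∈ {1,…,K_b}. -/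

import Mathlib

open Finset

/-- The maliciousness score of client `k`: `1/t` times the sum of the `t` smallest values
among the distances `d k k'` for `k' ≠ k` (the minimum over size-`t` subsets of the sum). -/
noncomputable def malScore {K : ℕ} (d : Fin K → Fin K → ℝ) (t : ℕ) (k : Fin K) : ℝ :=
  sInf {x : ℝ | ∃ S : Finset (Fin K),
    S ⊆ Finset.univ.erase k ∧ S.card = t ∧ x = ∑ k' ∈ S, d k k'} / t

/-- deterministic separation of maliciousness scores: with
`K = K_b + K_m` clients (`1 ≤ K_m`; clients with index `< K_b` benign), `K̃_b` an
integer with `K_m < K̃_b ≤ K_b` and `K̃_b ≥ 2`, maliciousness scores computed from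
Euclidean distances with `K̃_b - 1` nearest neighbors, `d > 0`, if every malicious
vector is at Euclidean distance at least `d` from `μ` and every benign vector is within
distance `r` of `μ` with `0 ≤ r ≤ (K̃_b - K_m)·d/(3K̃_b - K_m - 2)`, then
`M(m) ≥ M(b)` for every malicious `m` and benign `b`. -/
theorem malScore_separation (H Kb Km Ktb : ℕ) (hKm1 : 1 ≤ Km)
    (h1 : Km < Ktb) (h2 : Ktb ≤ Kb) (h3 : 2 ≤ Ktb)
    (v : Fin (Kb + Km) → EuclideanSpace ℝ (Fin H))
    (μ : EuclideanSpace ℝ (Fin H)) (d : ℝ) (hd : 0 < d)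
    (hmal : ∀ m : Fin (Kb + Km), Kb ≤ (m : ℕ) → d ≤ ‖v m - μ‖)
    (r : ℝ) (hr0 : 0 ≤ r)
    (hr1 : r ≤ ((Ktb : ℝ) - (Km : ℝ)) * d / (3 * (Ktb : ℝ) - (Km : ℝ) - 2))
    (hben : ∀ k : Fin (Kb + Km), (k : ℕ) < Kb → ‖v k - μ‖ ≤ r) :
    ∀ m b : Fin (Kb + Km), Kb ≤ (m : ℕ) → (b : ℕ) < Kb →
      malScore (fun k1 k2 => ‖v k1 - v k2‖) (Ktb - 1) b ≤
        malScore (fun k1 k2 => ‖v k1 - v k2‖) (Ktb - 1) m := by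
  intro m b hm hb
  set t := Ktb - 1 with ht
  have htR : (t : ℝ) = (Ktb : ℝ) - 1 := by
    rw [ht, Nat.cast_sub (by omega)]; norm_num
  have htpos : (0 : ℝ) < t := by
    rw [htR]
    have : (2:ℝ) ≤ Ktb := by exact_mod_cast h3
    linarith
  have hD : (0:ℝ) < 3 * (Ktb : ℝ) - (Km : ℝ) - 2 := by
    have h1' : (Km:ℝ) < Ktb := by exact_mod_cast h1
    have h3' : (2:ℝ) ≤ Ktb := by exact_mod_cast h3
    linarith
  have hrD : r * (3 * (Ktb : ℝ) - (Km : ℝ) - 2) ≤ ((Ktb : ℝ) - (Km : ℝ)) * d :=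
    (le_div_iff₀ hD).mp hr1
  have hTM : (0:ℝ) < (Ktb : ℝ) - (Km : ℝ) := by
    have h1' : (Km:ℝ) < Ktb := by exact_mod_cast h1
    linarith
  have hrd : r ≤ d := by nlinarith
  have hbencard : Kb ≤ (univ.filter (fun k : Fin (Kb + Km) => (k : ℕ) < Kb)).card := by
    have hsub : (univ : Finset (Fin Kb)).map ⟨Fin.castLE (Nat.le_add_right Kb Km),
        (Fin.castLE_injective _)⟩ ⊆ univ.filter (fun k : Fin (Kb + Km) => (k : ℕ) < Kb) := by
      intro x hx
      simp only [Finset.mem_map, Finset.mem_filter, Finset.mem_univ, true_and] at hx ⊢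
      obtain ⟨y, -, rfl⟩ := hx
      exact y.isLt
    calc Kb = ((univ : Finset (Fin Kb)).map ⟨Fin.castLE (Nat.le_add_right Kb Km),
          (Fin.castLE_injective _)⟩).card := by simp
      _ ≤ _ := Finset.card_le_card hsub
  have hbdd : ∀ k : Fin (Kb + Km), BddBelow {x : ℝ | ∃ S : Finset (Fin (Kb + Km)),
      S ⊆ Finset.univ.erase k ∧ S.card = t ∧ x = ∑ k' ∈ S, ‖v k - v k'‖} := by
    intro k
    refine ⟨0, ?_⟩
    rintro x ⟨S, -, -, rfl⟩
    exact Finset.sum_nonneg fun _ _ => norm_nonneg _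
  -- Key 1: malScore b ≤ 2r
  have key1 : malScore (fun k1 k2 => ‖v k1 - v k2‖) t b ≤ 2 * r := by
    have hcard : t ≤ ((univ.filter (fun k : Fin (Kb + Km) => (k : ℕ) < Kb)).erase b).card := by
      have hbmem : b ∈ univ.filter (fun k : Fin (Kb + Km) => (k : ℕ) < Kb) := by
        simp [hb]
      rw [Finset.card_erase_of_mem hbmem]
      omega
    obtain ⟨S, hS, hScard⟩ := Finset.exists_subset_card_eq hcard
    have hSsub : S ⊆ Finset.univ.erase b := by
      intro x hx
      have hx' := hS hx
      simp only [Finset.mem_erase, Finset.mem_filter] at hx' ⊢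
      exact ⟨hx'.1, Finset.mem_univ x⟩
    have hmem : (∑ k' ∈ S, ‖v b - v k'‖) ∈ {x : ℝ | ∃ S : Finset (Fin (Kb + Km)),
        S ⊆ Finset.univ.erase b ∧ S.card = t ∧ x = ∑ k' ∈ S, ‖v b - v k'‖} :=
      ⟨S, hSsub, hScard, rfl⟩
    have hsum : (∑ k' ∈ S, ‖v b - v k'‖) ≤ (t : ℝ) * (2 * r) := by
      calc (∑ k' ∈ S, ‖v b - v k'‖) ≤ ∑ _k' ∈ S, (2 * r) := by
            apply Finset.sum_le_sum
            intro k' hk'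
            have hk'b : (k' : ℕ) < Kb := by
              have := hS hk'
              simp only [Finset.mem_erase, Finset.mem_filter] at this
              exact this.2.2
            have heq : ‖v b - v k'‖ = ‖(v b - μ) - (v k' - μ)‖ := by
              rw [sub_sub_sub_cancel_right]
            rw [heq]
            calc ‖(v b - μ) - (v k' - μ)‖ ≤ ‖v b - μ‖ + ‖v k' - μ‖ := norm_sub_le _ _
              _ ≤ r + r := add_le_add (hben b hb) (hben k' hk'b)
              _ = 2 * r := by ring
        _ = (t : ℝ) * (2 * r) := by rw [Finset.sum_const, hScard, nsmul_eq_mul]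
    unfold malScore
    rw [div_le_iff₀ htpos]
    calc sInf _ ≤ ∑ k' ∈ S, ‖v b - v k'‖ := csInf_le (hbdd b) hmem
      _ ≤ (t : ℝ) * (2 * r) := hsum
      _ = 2 * r * t := by ring
  -- Key 2: ((Ktb - Km) * (d - r)) / t ≤ malScore m
  have key2 : ((Ktb : ℝ) - (Km : ℝ)) * (d - r) / t ≤
      malScore (fun k1 k2 => ‖v k1 - v k2‖) t m := by
    have hdr : (0:ℝ) ≤ d - r := by linarith
    have hne : {x : ℝ | ∃ S : Finset (Fin (Kb + Km)),
        S ⊆ Finset.univ.erase m ∧ S.card = t ∧ x = ∑ k' ∈ S, ‖v m - v k'‖}.Nonempty := by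
      have hcard : t ≤ ((Finset.univ : Finset (Fin (Kb + Km))).erase m).card := by
        rw [Finset.card_erase_of_mem (Finset.mem_univ m), Finset.card_univ, Fintype.card_fin]
        omega
      obtain ⟨S, hS, hScard⟩ := Finset.exists_subset_card_eq hcard
      exact ⟨_, S, hS, hScard, rfl⟩
    have hlb : ((Ktb : ℝ) - (Km : ℝ)) * (d - r) ≤ sInf {x : ℝ | ∃ S : Finset (Fin (Kb + Km)),
        S ⊆ Finset.univ.erase m ∧ S.card = t ∧ x = ∑ k' ∈ S, ‖v m - v k'‖} := by
      apply le_csInf hne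
      rintro x ⟨S, hSsub, hScard, rfl⟩
      set B := S.filter (fun k : Fin (Kb + Km) => (k : ℕ) < Kb) with hB
      have hmalcard : (S.filter (fun k : Fin (Kb + Km) => ¬ (k : ℕ) < Kb)).card ≤ Km - 1 := by
        have hsub2 : S.filter (fun k : Fin (Kb + Km) => ¬ (k : ℕ) < Kb) ⊆
            (univ.filter (fun k : Fin (Kb + Km) => ¬ (k : ℕ) < Kb)).erase m := by
          intro x hx
          simp only [Finset.mem_filter, Finset.mem_erase, Finset.mem_univ, true_and] at hx ⊢
          exact ⟨(Finset.mem_erase.mp (hSsub hx.1)).1, hx.2⟩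
        have hfiltercard : (univ.filter (fun k : Fin (Kb + Km) => ¬ (k : ℕ) < Kb)).card ≤ Km := by
          have heq := Finset.card_filter_add_card_filter_not
            (s := (univ : Finset (Fin (Kb + Km)))) (p := fun k => (k : ℕ) < Kb)
          rw [Finset.card_univ, Fintype.card_fin] at heq
          omega
        have hmmem : m ∈ univ.filter (fun k : Fin (Kb + Km) => ¬ (k : ℕ) < Kb) := by
          simp only [Finset.mem_filter, Finset.mem_univ, true_and, Nat.not_lt]
          exact hm
        calc (S.filter (fun k : Fin (Kb + Km) => ¬ (k : ℕ) < Kb)).card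
            ≤ ((univ.filter (fun k : Fin (Kb + Km) => ¬ (k : ℕ) < Kb)).erase m).card :=
              Finset.card_le_card hsub2
          _ = (univ.filter (fun k : Fin (Kb + Km) => ¬ (k : ℕ) < Kb)).card - 1 :=
              Finset.card_erase_of_mem hmmem
          _ ≤ Km - 1 := by omega
      have hBcard : Ktb - Km ≤ B.card := by
        have heq := Finset.card_filter_add_card_filter_not
          (s := S) (p := fun k : Fin (Kb + Km) => (k : ℕ) < Kb)
        rw [hScard] at heq
        rw [hB]
        omega
      have hBcardR : ((Ktb : ℝ) - (Km : ℝ)) ≤ (B.card : ℝ) := by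
        have hcast : ((Ktb - Km : ℕ) : ℝ) ≤ (B.card : ℝ) := by exact_mod_cast hBcard
        rwa [Nat.cast_sub h1.le] at hcast
      calc ((Ktb : ℝ) - (Km : ℝ)) * (d - r) ≤ (B.card : ℝ) * (d - r) :=
            mul_le_mul_of_nonneg_right hBcardR hdr
        _ = ∑ _k' ∈ B, (d - r) := by rw [Finset.sum_const, nsmul_eq_mul]
        _ ≤ ∑ k' ∈ B, ‖v m - v k'‖ := by
            apply Finset.sum_le_sum
            intro k' hk'
            have hk'b : (k' : ℕ) < Kb := (Finset.mem_filter.mp hk').2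
            have heq : ‖v m - v k'‖ = ‖(v m - μ) - (v k' - μ)‖ := by
              rw [sub_sub_sub_cancel_right]
            rw [heq]
            have htri := norm_sub_norm_le (v m - μ) (v k' - μ)
            have h2' := hmal m hm
            have h3' := hben k' hk'b
            linarith
        _ ≤ ∑ k' ∈ S, ‖v m - v k'‖ := by
            apply Finset.sum_le_sum_of_subset_of_nonneg (Finset.filter_subset _ _)
            intro i _ _
            exact norm_nonneg _
    unfold malScore
    exact (div_le_div_iff_of_pos_right htpos).mpr hlb
  -- combine
  have hmid : 2 * r ≤ ((Ktb : ℝ) - (Km : ℝ)) * (d - r) / t := by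
    rw [le_div_iff₀ htpos, htR]
    nlinarith
  linarith
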